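/- Let I ⊆ ℝ be an interval and f : I → ℝ a continuous non-constant function. Then the group Is(f) = {φ : I → I an isometry of I for the Euclidean metric such that f ∘ φ = f} is either trivial, or isomorphic to ℤ/2ℤ, or to ℤ, or to the infinite dihedral group D∞. -/

import Mathlib

namespace IsomCls


lemma e_pm (g : ℝ ≃ᵢ ℝ) : g 1 - g 0 = 1 ∨ g 1 - g 0 = -1 := by
  have h := g.dist_eq 1 0
  rw [Real.dist_eq, Real.dist_eq] at h
  simp only [sub_zero] at h
  rcases abs_cases (g 1 - g 0) with ⟨h1, _⟩ | ⟨h1, _⟩ <;> rw [h1] at h <;>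
    [left; right] <;> [skip; skip] <;> norm_num at h ⊢ <;> linarith

lemma affine (g : ℝ ≃ᵢ ℝ) (x : ℝ) : g x = g 0 + (g 1 - g 0) * x := by
  have hA : (g x - g 0) ^ 2 = (x - 0) ^ 2 := by
    have h := g.dist_eq x 0
    rw [Real.dist_eq, Real.dist_eq] at h
    rw [← sq_abs (g x - g 0), ← sq_abs (x - 0), h]
  have hB : (g x - g 1) ^ 2 = (x - 1) ^ 2 := by
    have h := g.dist_eq x 1
    rw [Real.dist_eq, Real.dist_eq] at h
    rw [← sq_abs (g x - g 1), ← sq_abs (x - 1), h]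
  rcases e_pm g with h | h
  · have hc : g 1 = g 0 + 1 := by linarith
    rw [hc] at hB ⊢
    linear_combination (hA - hB) / 2
  · have hc : g 1 = g 0 - 1 := by linarith
    rw [hc] at hB ⊢
    linear_combination (hB - hA) / 2

lemma one_apply (x : ℝ) : (1 : ℝ ≃ᵢ ℝ) x = x := rfl

lemma mul_apply (g h : ℝ ≃ᵢ ℝ) (x : ℝ) : (g * h) x = g (h x) := rfl

lemma e_mul (g h : ℝ ≃ᵢ ℝ) : (g * h) 1 - (g * h) 0 = (g 1 - g 0) * (h 1 - h 0) := by
  rw [mul_apply, mul_apply, affine g (h 1), affine g (h 0)]; ring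

lemma t_mul (g h : ℝ ≃ᵢ ℝ) : (g * h) 0 = g 0 + (g 1 - g 0) * h 0 := by
  rw [mul_apply, affine g (h 0)]

lemma ext' {g h : ℝ ≃ᵢ ℝ} (he : g 1 - g 0 = h 1 - h 0) (ht : g 0 = h 0) : g = h := by
  apply IsometryEquiv.ext
  intro x
  rw [affine g x, affine h x, he, ht]

lemma e_inv (g : ℝ ≃ᵢ ℝ) : g⁻¹ 1 - g⁻¹ 0 = g 1 - g 0 := by
  have h : (g * g⁻¹) 1 - (g * g⁻¹) 0 = 1 := by
    rw [mul_inv_cancel]; norm_num [one_apply]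
  rw [e_mul] at h
  rcases e_pm g with h1 | h1 <;> rcases e_pm g⁻¹ with h2 | h2 <;>
    rw [h1, h2] at h ⊢ <;> norm_num at h

lemma t_inv (g : ℝ ≃ᵢ ℝ) : g⁻¹ 0 = -((g 1 - g 0) * g 0) := by
  have h : (g * g⁻¹) 0 = 0 := by rw [mul_inv_cancel]; norm_num [one_apply]
  rw [t_mul] at h
  rcases e_pm g with h1 | h1 <;> rw [h1] at h ⊢ <;> linarith

lemma zpow_et {g : ℝ ≃ᵢ ℝ} (hg : g 1 - g 0 = 1) (n : ℤ) :
    (g ^ n) 1 - (g ^ n) 0 = 1 ∧ (g ^ n) 0 = n * g 0 := by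
  induction n using Int.induction_on with
  | zero => norm_num [one_apply]
  | succ i ih =>
    rw [zpow_add_one]
    constructor
    · rw [e_mul, ih.1, hg]; ring
    · rw [t_mul, ih.1, ih.2]; push_cast; ring
  | pred i ih =>
    rw [zpow_sub_one]
    constructor
    · rw [e_mul, ih.1, e_inv, hg]; ring
    · rw [t_mul, ih.1, ih.2, t_inv, hg]; push_cast; ring


def zc : ZMod 0 → ℤ := fun i => i
def cz : ℤ → ZMod 0 := fun n => n
lemma zc_add (i j : ZMod 0) : zc (i + j) = zc i + zc j := rfl
lemma zc_sub (i j : ZMod 0) : zc (i - j) = zc i - zc j := rfl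
end IsomCls

open IsomCls in
/-- Let `I ⊆ ℝ` be an interval and `f` a continuous non-constant
function on `I`. Then the group `Is(f)` of Euclidean isometries of `I` preserving `f`
is either trivial, or isomorphic to `ℤ/2ℤ`, to `ℤ`, or to the infinite dihedral group. -/
theorem isometry_group_of_function_classification
    (I : Set ℝ) (hI : I.OrdConnected) (f : ℝ → ℝ)
    (hf : ContinuousOn f I)
    (hnc : ∃ x ∈ I, ∃ y ∈ I, f x ≠ f y)
    (G : Subgroup (ℝ ≃ᵢ ℝ))
    (hG : ∀ φ : ℝ ≃ᵢ ℝ, φ ∈ G ↔ ((⇑φ) '' I = I ∧ ∀ x ∈ I, f (φ x) = f x)) :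
    Subsingleton G ∨
      Nonempty (G ≃* Multiplicative (ZMod 2)) ∨
      Nonempty (G ≃* Multiplicative ℤ) ∨
      Nonempty (G ≃* DihedralGroup 0) := by
  -- the subgroup of translation lengths
  set A : AddSubgroup ℝ :=
    { carrier := {t | ∃ g ∈ G, g 1 - g 0 = 1 ∧ g 0 = t}
      zero_mem' := ⟨1, G.one_mem, by norm_num [one_apply]⟩
      add_mem' := by
        rintro s t ⟨g, hg, hge, hgt⟩ ⟨h, hh, hhe, hht⟩
        exact ⟨g * h, G.mul_mem hg hh, by rw [e_mul, hge, hhe]; ring,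
          by rw [t_mul, hge, hgt, hht]; ring⟩
      neg_mem' := by
        rintro t ⟨g, hg, hge, hgt⟩
        exact ⟨g⁻¹, G.inv_mem hg, by rw [e_inv, hge], by rw [t_inv, hge, hgt]; ring⟩ }
    with hAdef
  have hmemA : ∀ t, t ∈ A ↔ ∃ g ∈ G, g 1 - g 0 = 1 ∧ g 0 = t := fun t => Iff.rfl
  obtain ⟨x₀, hx₀, y₀, hy₀, hfxy⟩ := hnc
  rcases AddSubgroup.dense_or_cyclic A with hdense | ⟨a, hA⟩
  · -- dense case: contradiction with non-constancy
    exfalso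
    -- get a nonzero element of A
    obtain ⟨t, htA, htne⟩ : ∃ t ∈ A, t ≠ 0 := by
      have h1 : (1 : ℝ) ∈ closure (A : Set ℝ) := hdense 1
      rw [Metric.mem_closure_iff] at h1
      obtain ⟨t, htA, hdist⟩ := h1 (1/2) (by norm_num)
      refine ⟨t, htA, fun h => ?_⟩
      rw [h, Real.dist_eq] at hdist
      norm_num at hdist
    obtain ⟨g, hgG, hge, hgt⟩ := htA
    -- every `x₀ + n*t` is in `I`
    have hstep : ∀ n : ℤ, x₀ + n * t ∈ I := by
      intro n
      have hz := zpow_et hge n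
      have hgn : g ^ n ∈ G := G.zpow_mem hgG n
      have himg := ((hG _).mp hgn).1
      have hx : (g ^ n) x₀ ∈ I := by
        rw [← himg]; exact Set.mem_image_of_mem _ hx₀
      have hval : (g ^ n) x₀ = x₀ + n * t := by
        rw [affine, hz.1, hz.2, hgt]; ring
      rwa [hval] at hx
    -- hence I = univ
    have hs : (0:ℝ) < |t| := abs_pos.mpr htne
    have hstep' : ∀ n : ℤ, x₀ + n * |t| ∈ I := by
      intro n
      rcases abs_cases t with ⟨h1, _⟩ | ⟨h1, _⟩
      · rw [h1]; exact hstep n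
      · rw [h1]
        have := hstep (-n)
        push_cast at this ⊢
        convert this using 2
        ring
    have hIuniv : I = Set.univ := by
      rw [Set.eq_univ_iff_forall]
      intro y
      set n : ℤ := ⌊(y - x₀) / |t|⌋ with hn
      have h1 : x₀ + n * |t| ≤ y := by
        have := Int.floor_le ((y - x₀) / |t|)
        rw [← hn] at this
        have := mul_le_mul_of_nonneg_right this (le_of_lt hs)
        rw [div_mul_cancel₀ _ (ne_of_gt hs)] at this
        linarith
      have h2 : y ≤ x₀ + (n + 1) * |t| := by
        have := le_of_lt (Int.lt_floor_add_one ((y - x₀) / |t|))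
        rw [← hn] at this
        have := mul_le_mul_of_nonneg_right this (le_of_lt hs)
        rw [div_mul_cancel₀ _ (ne_of_gt hs)] at this
        push_cast
        linarith
      have h3 := hstep' (n + 1)
      have h4 := hI.out (hstep' n) h3
      refine h4 ⟨h1, ?_⟩
      push_cast
      linarith
    have hfc : Continuous f := by
      rw [hIuniv] at hf
      exact continuousOn_univ.mp hf
    -- f is invariant under all elements of A
    have hper : ∀ s ∈ (A : Set ℝ), f (x₀ + s) = f x₀ := by
      rintro s ⟨g, hgG, hge, hgt⟩
      have hfp := ((hG _).mp hgG).2 x₀ hx₀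
      have : g x₀ = x₀ + s := by rw [affine, hge, hgt]; ring
      rw [this] at hfp
      exact hfp
    have heq : (fun s => f (x₀ + s)) = fun _ => f x₀ :=
      Continuous.ext_on hdense (hfc.comp (by continuity)) continuous_const hper
    have := congrFun heq (y₀ - x₀)
    simp only [add_sub_cancel] at this
    exact hfxy this.symm
  · -- cyclic case
    have hmemn : ∀ g ∈ G, g 1 - g 0 = 1 → ∃ n : ℤ, g 0 = n * a := by
      intro g hg hge
      have : g 0 ∈ A := ⟨g, hg, hge, rfl⟩
      rw [hA, AddSubgroup.mem_closure_singleton] at this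
      obtain ⟨n, hn⟩ := this
      exact ⟨n, by rw [← hn, zsmul_eq_mul]⟩
    have haA : a ∈ A := by
      rw [hA, AddSubgroup.mem_closure_singleton]; exact ⟨1, one_zsmul a⟩
    by_cases hrefl : ∃ s ∈ G, s 1 - s 0 = -1
    · by_cases ha0 : a = 0
      · -- ZMod 2
        right; left
        obtain ⟨s₀, hs₀G, hs₀e⟩ := hrefl
        have htriv : ∀ g ∈ G, g 1 - g 0 = 1 → g = 1 := by
          intro g hg hge
          obtain ⟨n, hn⟩ := hmemn g hg hge
          apply ext' (by rw [hge]; norm_num [one_apply])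
          rw [hn, ha0, one_apply]; ring
        have hs2 : s₀ * s₀ = 1 :=
          htriv _ (G.mul_mem hs₀G hs₀G) (by rw [e_mul, hs₀e]; ring)
        have hdich : ∀ g : G, g = 1 ∨ g = ⟨s₀, hs₀G⟩ := by
          rintro ⟨g, hg⟩
          rcases e_pm g with hge | hge
          · exact Or.inl (Subtype.ext (htriv g hg hge))
          · right
            apply Subtype.ext
            have h1 : s₀ * g = 1 :=
              htriv _ (G.mul_mem hs₀G hg) (by rw [e_mul, hs₀e, hge]; ring)
            show g = s₀
            calc g = s₀ * (s₀ * g) := by rw [← mul_assoc, hs2, one_mul]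
            _ = s₀ := by rw [h1, mul_one]
        have hne : (1 : G) ≠ ⟨s₀, hs₀G⟩ := by
          intro h
          have h2 : ((1 : G) : ℝ ≃ᵢ ℝ) 1 - ((1 : G) : ℝ ≃ᵢ ℝ) 0 = s₀ 1 - s₀ 0 := by rw [h]
          have h3 : ((1 : G) : ℝ ≃ᵢ ℝ) = 1 := rfl
          rw [h3, hs₀e, one_apply, one_apply] at h2
          norm_num at h2
        have hcard : Nat.card G = 2 := by
          rw [Nat.card_eq_two_iff]
          exact ⟨1, ⟨s₀, hs₀G⟩, hne, Set.eq_univ_of_forall fun g => by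
            rcases hdich g with h | h <;> simp [h]⟩
        have : Fact (Nat.Prime 2) := ⟨Nat.prime_two⟩
        have hcyc : IsCyclic G := isCyclic_of_prime_card hcard
        exact ⟨(zmodCyclicMulEquiv hcyc).symm.trans
          (AddEquiv.toMultiplicative (ZMod.ringEquivCongr hcard).toAddEquiv)⟩
      · -- D∞
        right; right; right
        obtain ⟨s₀, hs₀G, hs₀e⟩ := hrefl
        obtain ⟨g₀, hg₀G, hg₀e, hg₀t⟩ := haA
        set S : G := ⟨s₀, hs₀G⟩ with hSdef
        set T : G := ⟨g₀, hg₀G⟩ with hTdef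
        have hs2 : s₀ * s₀ = 1 := by
          apply ext'
          · rw [e_mul, hs₀e]; norm_num [one_apply]
          · rw [t_mul, hs₀e, one_apply]; ring
        have hS2 : S * S = 1 := Subtype.ext hs2
        have hSinv : S⁻¹ = S := by
          rw [← mul_one S⁻¹, ← hS2, ← mul_assoc, inv_mul_cancel, one_mul]
        have hconj : S * T * S⁻¹ = T⁻¹ := by
          rw [hSinv]
          apply Subtype.ext
          show s₀ * g₀ * s₀ = g₀⁻¹
          apply ext'
          · rw [e_mul, e_mul, e_inv, hs₀e, hg₀e]; ring
          · rw [t_mul, e_mul, t_mul, t_inv, hs₀e, hg₀e]; ring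
        have hconjn : ∀ n : ℤ, S * T ^ n * S⁻¹ = T ^ (-n) := by
          intro n
          have h1 := map_zpow (MulAut.conj S) T n
          simp only [MulAut.conj_apply] at h1
          rw [h1, hconj, inv_zpow, ← zpow_neg]
        have hmove0 : ∀ n : ℤ, S * T ^ n = T ^ (-n) * S := by
          intro n
          rw [← hconjn n, inv_mul_cancel_right]
        have hmove : ∀ n : ℤ, T ^ n * S = S * T ^ (-n) := by
          intro n
          rw [hmove0 (-n), neg_neg]
        have hcoeT : ∀ n : ℤ, ((T ^ n : G) : ℝ ≃ᵢ ℝ) = g₀ ^ n := fun n => rfl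
        set Φf : DihedralGroup 0 → G := fun x =>
          match x with
          | DihedralGroup.r i => T ^ (zc i)
          | DihedralGroup.sr i => S * T ^ (zc i)
          with hΦf
        have hmul : ∀ x y : DihedralGroup 0, Φf (x * y) = Φf x * Φf y := by
          rintro (i | i) (j | j)
          · rw [DihedralGroup.r_mul_r]
            show T ^ zc (i + j) = T ^ zc i * T ^ zc j
            rw [zc_add]
            exact zpow_add T (zc i) (zc j)
          · rw [DihedralGroup.r_mul_sr]
            show S * T ^ zc (j - i) = T ^ zc i * (S * T ^ zc j)
            rw [← mul_assoc, hmove, mul_assoc, ← zpow_add, zc_sub]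
            congr 1
            ring
          · rw [DihedralGroup.sr_mul_r]
            show S * T ^ zc (i + j) = S * T ^ zc i * T ^ zc j
            rw [mul_assoc, ← zpow_add, zc_add]
          · rw [DihedralGroup.sr_mul_sr]
            show T ^ zc (j - i) = S * T ^ zc i * (S * T ^ zc j)
            rw [mul_assoc, ← mul_assoc (T ^ (zc i)), hmove, ← mul_assoc,
              ← mul_assoc, hS2, one_mul, ← zpow_add, zc_sub]
            congr 1
            ring
        set Φ : DihedralGroup 0 →* G := MonoidHom.mk' Φf hmul with hΦ
        have hbij : Function.Bijective Φ := by
          constructor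
          · rw [injective_iff_map_eq_one]
            rintro (i | i) h
            · have h2 := congrArg (fun x : G => (x : ℝ ≃ᵢ ℝ) 0) h
              have h3 : (g₀ ^ (zc i)) 0 = (1 : ℝ ≃ᵢ ℝ) 0 := h2
              rw [(zpow_et hg₀e _).2, hg₀t, one_apply] at h3
              have h4 : (zc i) = 0 := by
                exact_mod_cast (mul_eq_zero.mp h3).resolve_right ha0
              rw [DihedralGroup.one_def]
              exact congrArg DihedralGroup.r h4
            · exfalso
              have h2 := congrArg (fun x : G => (x : ℝ ≃ᵢ ℝ) 1 - (x : ℝ ≃ᵢ ℝ) 0) h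
              have h3 : (s₀ * g₀ ^ (zc i)) 1 - (s₀ * g₀ ^ (zc i)) 0
                  = (1 : ℝ ≃ᵢ ℝ) 1 - (1 : ℝ ≃ᵢ ℝ) 0 := h2
              rw [e_mul, hs₀e, (zpow_et hg₀e _).1, one_apply, one_apply] at h3
              norm_num at h3
          · rintro ⟨g, hg⟩
            rcases e_pm g with hge | hge
            · obtain ⟨n, hn⟩ := hmemn g hg hge
              refine ⟨DihedralGroup.r (cz n), Subtype.ext ?_⟩
              show g₀ ^ n = g
              apply ext'
              · rw [(zpow_et hg₀e n).1, hge]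
              · rw [(zpow_et hg₀e n).2, hg₀t, hn]
            · have hu : s₀ * g ∈ G := G.mul_mem hs₀G hg
              have hue : (s₀ * g) 1 - (s₀ * g) 0 = 1 := by
                rw [e_mul, hs₀e, hge]; ring
              obtain ⟨n, hn⟩ := hmemn _ hu hue
              refine ⟨DihedralGroup.sr (cz n), Subtype.ext ?_⟩
              show s₀ * g₀ ^ n = g
              have h1 : g₀ ^ n = s₀ * g := by
                apply ext'
                · rw [(zpow_et hg₀e n).1, hue]
                · rw [(zpow_et hg₀e n).2, hg₀t, hn]
              rw [h1, ← mul_assoc, hs2, one_mul]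
        exact ⟨(MulEquiv.ofBijective Φ hbij).symm⟩
    · -- no reflections
      have htrans : ∀ g ∈ G, g 1 - g 0 = 1 := by
        intro g hg
        rcases e_pm g with h | h
        · exact h
        · exact absurd ⟨g, hg, h⟩ hrefl
      by_cases ha0 : a = 0
      · -- trivial
        left
        have htriv : ∀ g : G, (g : ℝ ≃ᵢ ℝ) = 1 := by
          rintro ⟨g, hg⟩
          obtain ⟨n, hn⟩ := hmemn g hg (htrans g hg)
          apply ext' (by rw [htrans g hg]; norm_num [one_apply])
          rw [hn, ha0, one_apply]; ring
        exact ⟨fun g h => Subtype.ext ((htriv g).trans (htriv h).symm)⟩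
      · -- G ≅ ℤ
        right; right; left
        obtain ⟨g₀, hg₀G, hg₀e, hg₀t⟩ := haA
        set φ := zpowersHom G (⟨g₀, hg₀G⟩ : G) with hφ
        have hcoe : ∀ n : ℤ, (((⟨g₀, hg₀G⟩ : G) ^ n : G) : ℝ ≃ᵢ ℝ) = g₀ ^ n := fun n => rfl
        have hbij : Function.Bijective φ := by
          constructor
          · intro n m h
            have h2 := congrArg (fun x : G => (x : ℝ ≃ᵢ ℝ) 0) h
            simp only [hφ, zpowersHom_apply, hcoe] at h2
            rw [(zpow_et hg₀e _).2, (zpow_et hg₀e _).2, hg₀t] at h2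
            have h3 : (Multiplicative.toAdd n : ℤ) = Multiplicative.toAdd m := by
              exact_mod_cast mul_right_cancel₀ ha0 h2
            exact Multiplicative.toAdd.injective h3
          · rintro ⟨g, hg⟩
            obtain ⟨n, hn⟩ := hmemn g hg (htrans g hg)
            refine ⟨Multiplicative.ofAdd n, Subtype.ext ?_⟩
            simp only [hφ, zpowersHom_apply, toAdd_ofAdd, hcoe]
            apply ext'
            · rw [(zpow_et hg₀e n).1, htrans g hg]
            · rw [(zpow_et hg₀e n).2, hg₀t, hn]
        exact ⟨(MulEquiv.ofBijective φ hbij).symm⟩
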